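/- Let q = p^n ≡ 3 (mod 4) be an odd prime power and χ the quadratic character of 𝔽_q. Then ∑_{x ∈ 𝔽_q} χ((x²+x)(x²+x+1)) = −∑_{x ∈ 𝔽_q} χ(x(x+1)(x−3)) − 1. -/

import Mathlib

open Finset

theorem stmt3 (p n : ℕ) (hp : p.Prime) (hp2 : p ≠ 2) (hn : 0 < n)
    (F : Type*) [Field F] [Fintype F] [DecidableEq F]
    (hcard : Fintype.card F = p ^ n) (hq : p ^ n % 4 = 3) :
    ∑ x : F, quadraticChar F ((x ^ 2 + x) * (x ^ 2 + x + 1)) = - (∑ x : F, quadraticChar F (x * (x + 1) * (x - 3))) - 1 := by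
  have hchar : ringChar F ≠ 2 := by
    intro h
    have h2 := FiniteField.even_card_of_char_two h
    rw [hcard] at h2
    omega
  set χ := quadraticChar F with hχdef
  have h2 : (2 : F) ≠ 0 := Ring.two_ne_zero hchar
  set c : F := (2 : F)⁻¹ with hcdef
  have hc0 : c ≠ 0 := inv_ne_zero h2
  have hc2 : 2 * c = 1 := mul_inv_cancel₀ h2
  have hneg1 : χ (-1) = -1 := by
    apply quadraticChar_neg_one_iff_not_isSquare.mpr
    rw [FiniteField.isSquare_neg_one_iff, hcard]
    simpa using hq
  -- substitution lemmas
  have hshift : ∀ (a : F) (f : F → ℤ), ∑ x : F, f (x - a) = ∑ x : F, f x := by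
    intro a f
    exact Fintype.sum_equiv (Equiv.subRight a) _ _ (fun x => rfl)
  have hnegsub : ∀ (f : F → ℤ), ∑ x : F, f (-x) = ∑ x : F, f x := by
    intro f
    exact Fintype.sum_equiv (Equiv.neg F) _ _ (fun x => rfl)
  have hmulsub : ∀ (a : F), a ≠ 0 → ∀ (f : F → ℤ), ∑ x : F, f (a * x) = ∑ x : F, f x := by
    intro a ha f
    exact Fintype.sum_equiv (Equiv.mulLeft₀ a ha) _ _ (fun x => rfl)
  -- sum over squares
  have hsq : ∀ f : F → ℤ, ∑ x : F, f (x ^ 2) = ∑ y : F, f y + ∑ y : F, χ y * f y := by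
    intro f
    rw [← Finset.sum_fiberwise' (univ : Finset F) (fun x => x ^ 2) f, ← Finset.sum_add_distrib]
    refine Finset.sum_congr rfl fun y _ => ?_
    rw [Finset.sum_const, nsmul_eq_mul]
    have hcy := quadraticChar_card_sqrts hchar y
    have hset : {x : F | x ^ 2 = y}.toFinset = univ.filter (fun x => x ^ 2 = y) := by
      ext x; simp
    rw [hset] at hcy
    rw [hcy]
    ring
  -- base sum : ∑ χ (y (y+1)) = -1
  have hbase : ∀ a : F, ∑ y : F, χ ((y - a) * ((y - a) + 1)) = -1 := by
    intro a
    rw [hshift a (fun y => χ (y * (y + 1)))]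
    have hbij : Function.Bijective (fun y : F => if y = 0 then 1 else 1 + y⁻¹) := by
      apply Function.bijective_iff_has_inverse.mpr
      refine ⟨fun z => if z = 1 then 0 else (z - 1)⁻¹, fun y => ?_, fun z => ?_⟩
      · by_cases hy : y = 0
        · simp [hy]
        · have h1 : (1 : F) + y⁻¹ ≠ 1 := by simp [inv_ne_zero hy]
          simp only [if_neg hy, if_neg h1]
          simp
      · by_cases hz : z = 1
        · simp [hz]
        · have hz0 : (z - 1)⁻¹ ≠ 0 := inv_ne_zero (sub_ne_zero.mpr hz)
          simp only [if_neg hz, if_neg hz0]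
          field_simp
          ring
    have hs := Fintype.sum_bijective _ hbij
      (fun y : F => χ (y * (y + 1)))
      (fun z : F => χ z - if z = 1 then 1 else 0) ?_
    · rw [hs, Finset.sum_sub_distrib, hχdef, quadraticChar_sum_zero hchar]
      simp
    · intro y
      by_cases hy : y = 0
      · simp [hy, hχdef, quadraticChar_zero]
      · have h1 : (1 : F) + y⁻¹ ≠ 1 := by simp [inv_ne_zero hy]
        simp only [if_neg hy, if_neg h1, sub_zero]
        have hy2 : y * (y + 1) = y ^ 2 * (1 + y⁻¹) := by
          field_simp
        rw [hy2, map_mul, hχdef, quadraticChar_sq_one' hy, one_mul]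
  -- Step 1: shift x ↦ x - c
  have step1 : ∑ x : F, χ ((x ^ 2 + x) * (x ^ 2 + x + 1))
      = ∑ u : F, χ ((u ^ 2 - c ^ 2) * ((u ^ 2 - c ^ 2) + 1)) := by
    rw [← hshift c (fun x => χ ((x ^ 2 + x) * (x ^ 2 + x + 1)))]
    refine Finset.sum_congr rfl fun u _ => ?_
    have harg : (u - c) ^ 2 + (u - c) = u ^ 2 - c ^ 2 := by
      linear_combination (c - u) * hc2
    show χ (((u - c) ^ 2 + (u - c)) * ((u - c) ^ 2 + (u - c) + 1)) = _
    rw [harg]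
  -- Step 2: sum over squares with f y = χ ((y - c²)(y - c² + 1))
  have step2 : ∑ u : F, χ ((u ^ 2 - c ^ 2) * ((u ^ 2 - c ^ 2) + 1))
      = -1 + ∑ y : F, χ y * χ ((y - c ^ 2) * ((y - c ^ 2) + 1)) := by
    rw [hsq (fun y => χ ((y - c ^ 2) * ((y - c ^ 2) + 1))), hbase (c ^ 2)]
  -- Step 3: the weighted sum equals ∑ χ (z (z-1) (z+3))
  have hd0 : c ^ 2 ≠ 0 := pow_ne_zero 2 hc0
  have h4d : 4 * c ^ 2 = 1 := by linear_combination (2 * c + 1) * hc2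
  have step3 : ∑ y : F, χ y * χ ((y - c ^ 2) * ((y - c ^ 2) + 1))
      = ∑ z : F, χ (z * (z - 1) * (z + 3)) := by
    rw [← hmulsub (c ^ 2) hd0 (fun y => χ y * χ ((y - c ^ 2) * ((y - c ^ 2) + 1)))]
    refine Finset.sum_congr rfl fun z _ => ?_
    show χ (c ^ 2 * z) * χ ((c ^ 2 * z - c ^ 2) * ((c ^ 2 * z - c ^ 2) + 1)) = _
    rw [← map_mul]
    have harg : c ^ 2 * z * ((c ^ 2 * z - c ^ 2) * ((c ^ 2 * z - c ^ 2) + 1))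
        = (c ^ 3) ^ 2 * (z * (z - 1) * (z + 3)) := by
      linear_combination (-(c ^ 4) * z * (z - 1)) * h4d
    rw [harg, map_mul, hχdef, quadraticChar_sq_one' (pow_ne_zero 3 hc0), one_mul]
  -- Step 4: z ↦ -z
  have step4 : ∑ z : F, χ (z * (z - 1) * (z + 3))
      = - ∑ z : F, χ (z * (z + 1) * (z - 3)) := by
    rw [← hnegsub (fun z => χ (z * (z - 1) * (z + 3)))]
    rw [← Finset.sum_neg_distrib]
    refine Finset.sum_congr rfl fun z _ => ?_
    show χ ((-z) * ((-z) - 1) * ((-z) + 3)) = -χ (z * (z + 1) * (z - 3))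
    have harg : (-z) * ((-z) - 1) * ((-z) + 3) = (-1) * (z * (z + 1) * (z - 3)) := by
      ring
    rw [harg, map_mul, hneg1, neg_one_mul]
  rw [step1, step2, step3, step4]
  ring
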